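/- arXiv:2504.04447 — 2 statements merged into one kernel-verified Lean document; each statement's English description precedes it below -/
import Mathlib

section
/- Fix d ≥ 1, ν > 0, ε > 0 and γ ∈ ℝ. Let g : ℝ → ℝ^d be any function and let C : ℝ → Matrix (Fin d) (Fin d) ℝ be differentiable with C(t) symmetric for every t and with derivative C'(t) = g(t)⊗g(t) - ν(‖C(t)‖_F² + ε)^{(γ-2)/2} • C(t) for all t ≥ 0, where g⊗g denotes the rank-one matrix with entries g_i g_j and ‖·‖_F is the Frobenius norm. If C(0) is positive semi-definite, then C(t) is positive semi-definite for all t ≥ 0, i.e. ξᵀC(t)ξ ≥ 0 for every ξ ∈ ℝ^d and t ≥ 0. -/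
open Matrix

/-- The squared Frobenius norm of a real matrix. -/
def frobSq {d : ℕ} (A : Matrix (Fin d) (Fin d) ℝ) : ℝ :=
  ∑ i, ∑ j, (A i j) ^ 2

/-- Preservation of positive semi-definiteness along the gradient flow
`C' = g ⊗ g - ν (‖C‖_F² + ε)^((γ-2)/2) • C`. -/
theorem posSemidef_preserved_gradient_flow
    (d : ℕ) (hd : 1 ≤ d) (ν ε γ : ℝ) (hν : 0 < ν) (hε : 0 < ε)
    (g : ℝ → (Fin d → ℝ)) (C : ℝ → Matrix (Fin d) (Fin d) ℝ)
    (hdiff : ∀ i j, Differentiable ℝ fun t => C t i j)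
    (hsymm : ∀ t, (C t).IsSymm)
    (hderiv : ∀ t ≥ (0 : ℝ), ∀ i j,
      HasDerivAt (fun s => C s i j)
        ((Matrix.vecMulVec (g t) (g t)
          - (ν * (frobSq (C t) + ε) ^ ((γ - 2) / 2)) • C t) i j) t)
    (h0 : (C 0).PosSemidef) :
    ∀ t ≥ (0 : ℝ), ∀ ξ : Fin d → ℝ, 0 ≤ ξ ⬝ᵥ (C t).mulVec ξ := by
  intro t ht ξ
  set z : ℝ → ℝ := fun s => ∑ i, ∑ j, ξ i * C s i j * ξ j with hz
  have hz_eq : ∀ s, ξ ⬝ᵥ (C s).mulVec ξ = z s := by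
    intro s
    simp [hz, dotProduct, mulVec, Finset.mul_sum, mul_assoc]
  rw [hz_eq]
  set a : ℝ → ℝ := fun s => ν * (frobSq (C s) + ε) ^ ((γ - 2) / 2) with ha
  have ha_pos : ∀ s, 0 < a s := by
    intro s
    apply mul_pos hν
    apply Real.rpow_pos_of_pos
    have : 0 ≤ frobSq (C s) := Finset.sum_nonneg fun i _ =>
      Finset.sum_nonneg fun j _ => sq_nonneg _
    linarith
  -- derivative of z
  have hz_deriv : ∀ s ≥ (0:ℝ), HasDerivAt z ((∑ i, g s i * ξ i)^2 - a s * z s) s := by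
    intro s hs
    have h1 : HasDerivAt z (∑ i, ∑ j, ξ i *
        ((Matrix.vecMulVec (g s) (g s) - (a s) • C s) i j) * ξ j) s := by
      apply HasDerivAt.fun_sum
      intro i _
      apply HasDerivAt.fun_sum
      intro j _
      exact ((hderiv s hs i j).const_mul (ξ i)).mul_const (ξ j)
    convert h1 using 1
    have : ∀ i j, ξ i * ((Matrix.vecMulVec (g s) (g s) - (a s) • C s) i j) * ξ j
        = (g s i * ξ i) * (g s j * ξ j) - a s * (ξ i * C s i j * ξ j) := by
      intro i j
      simp [Matrix.vecMulVec, Matrix.sub_apply, Matrix.smul_apply]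
      ring
    simp only [this, Finset.sum_sub_distrib, ← Finset.mul_sum]
    rw [sq, ← Finset.sum_mul]
  have hz_diff : Differentiable ℝ z := by
    apply Differentiable.fun_sum; intro i _; apply Differentiable.fun_sum; intro j _
    exact ((hdiff i j).const_mul _).mul_const _
  have hz0 : 0 ≤ z 0 := by rw [← hz_eq]; simpa using h0.dotProduct_mulVec_nonneg ξ
  by_contra hneg
  push_neg at hneg
  set S : Set ℝ := {s ∈ Set.Icc 0 t | 0 ≤ z s} with hS
  have hS_closed : IsClosed S :=
    (isClosed_Icc).inter (isClosed_le continuous_const hz_diff.continuous)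
  have hS_ne : S.Nonempty := ⟨0, ⟨le_refl 0, ht⟩, hz0⟩
  have hS_bdd : BddAbove S := ⟨t, fun s hs => hs.1.2⟩
  set u := sSup S with hu
  have hS_cpt : IsCompact S :=
    isCompact_Icc.of_isClosed_subset hS_closed fun s hs => hs.1
  have huS : u ∈ S := hS_cpt.sSup_mem hS_ne
  have hu0 : 0 ≤ u := huS.1.1
  have hut : u ≤ t := huS.1.2
  have hu_lt : u < t := lt_of_le_of_ne hut (fun h => by rw [h] at huS; exact absurd huS.2 (not_le.mpr hneg))
  have hz_neg : ∀ s, u < s → s ≤ t → z s < 0 := by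
    intro s hus hst
    by_contra h
    push_neg at h
    have : s ∈ S := ⟨⟨le_trans hu0 hus.le, hst⟩, h⟩
    exact absurd (le_csSup hS_bdd this) (not_le.mpr hus)
  have hmono : MonotoneOn z (Set.Icc u t) := by
    apply monotoneOn_of_deriv_nonneg (convex_Icc u t) hz_diff.continuous.continuousOn
      (hz_diff.differentiableOn.mono interior_subset)
    intro s hs
    rw [interior_Icc] at hs
    have hs0 : (0:ℝ) ≤ s := le_of_lt (lt_of_le_of_lt hu0 hs.1)
    have hd := hz_deriv s hs0
    rw [hd.deriv]
    have hzs : z s < 0 := hz_neg s hs.1 hs.2.le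
    nlinarith [sq_nonneg (∑ i, g s i * ξ i), mul_pos (ha_pos s) (neg_pos.mpr hzs)]
  have := hmono ⟨le_refl u, hut⟩ ⟨hut, le_refl t⟩ hut
  have : 0 ≤ z t := le_trans huS.2 this
  linarith
end

section
/- Fix d ≥ 1, ν > 0, ε > 0, γ ∈ ℝ and a time step δt > 0. Let Cₙ be a symmetric positive semi-definite real d×d matrix, let g ∈ ℝ^d, and suppose the symmetric matrix X satisfies the backward Euler equation (1 + δt·ν(‖X‖_F² + ε)^{(γ-2)/2}) • X = Cₙ + δt • (g⊗g), where g⊗g is the rank-one matrix with entries g_i g_j. Then X is positive semi-definite. -/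
open Matrix

/-- Backward Euler preserves positive semi-definiteness:
if `(1 + δt ν (‖X‖_F² + ε)^((γ-2)/2)) • X = Cₙ + δt • (g ⊗ g)` with
`Cₙ` symmetric PSD and `X` symmetric, then `X` is PSD. -/
theorem backwardEuler_posSemidef
    (d : ℕ) (hd : 1 ≤ d) (ν ε γ δt : ℝ) (hν : 0 < ν) (hε : 0 < ε) (hδt : 0 < δt)
    (Cn X : Matrix (Fin d) (Fin d) ℝ) (g : Fin d → ℝ)
    (hCn : Cn.PosSemidef) (hX : X.IsSymm)
    (heq : (1 + δt * (ν * (frobSq X + ε) ^ ((γ - 2) / 2))) • X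
            = Cn + δt • Matrix.vecMulVec g g) :
    X.PosSemidef := by
  set c : ℝ := 1 + δt * (ν * (frobSq X + ε) ^ ((γ - 2) / 2)) with hc
  have hfrob : 0 ≤ frobSq X := Finset.sum_nonneg fun i _ =>
    Finset.sum_nonneg fun j _ => sq_nonneg _
  have hcpos : 0 < c := by
    have : 0 < (frobSq X + ε) ^ ((γ - 2) / 2) :=
      Real.rpow_pos_of_pos (by linarith) _
    have : 0 < δt * (ν * (frobSq X + ε) ^ ((γ - 2) / 2)) := by positivity
    rw [hc]; linarith
  rw [posSemidef_iff_dotProduct_mulVec]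
  constructor
  · exact hX
  · intro x
    have key : c * dotProduct (star x) (X *ᵥ x)
        = dotProduct (star x) (Cn *ᵥ x) + δt * (dotProduct g x) ^ 2 := by
      have h1 : (c • X) *ᵥ x = (Cn + δt • Matrix.vecMulVec g g) *ᵥ x := by rw [heq]
      have h2 : dotProduct (star x) ((c • X) *ᵥ x)
          = dotProduct (star x) ((Cn + δt • Matrix.vecMulVec g g) *ᵥ x) := by rw [h1]
      simp only [smul_mulVec, dotProduct_smul, add_mulVec, dotProduct_add,
        smul_eq_mul] at h2
      rw [h2]
      congr 1
      have h3 : Matrix.vecMulVec g g *ᵥ x = (dotProduct g x) • g := by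
        ext i
        simp [Matrix.vecMulVec, Matrix.mulVec, dotProduct, Finset.mul_sum]
        rw [Finset.sum_mul]
        exact Finset.sum_congr rfl fun j _ => by ring
      rw [h3]
      simp [dotProduct_smul, dotProduct_comm x g, sq, mul_comm]
    have h4 : 0 ≤ dotProduct (star x) (Cn *ᵥ x) + δt * (dotProduct g x) ^ 2 := by
      have := hCn.dotProduct_mulVec_nonneg x
      positivity
    have := key ▸ h4
    exact nonneg_of_mul_nonneg_right this hcpos
end
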